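/- Let s: K → F_p^n be a linear map defined on a k-dimensional subspace K of F_p^n, and for D = p^h let Q_s(D) be the probability that a uniformly random linear map f: F_p^n → F_p^n with |ker(f)| = D extends s. Then Q_s, as a function of D on the points D = p^0, …, p^n, agrees with a polynomial in D of degree at most k. -/

import Mathlib

open Finset

def cnt (p n j : ℕ) : ℕ → ℕ → ℕ
  | 0, r => if r = j then 1 else 0
  | m+1, r => cnt p n j m r * p ^ r +
      (if r = 0 then 0 else cnt p n j m (r-1) * (p ^ n - p ^ (r-1)))

lemma cnt_eq_zero_of_lt {p n j m r : ℕ} (h : r < j) : cnt p n j m r = 0 := by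
  induction m generalizing r with
  | zero => simp [cnt, Nat.ne_of_lt h]
  | succ m ih =>
    rw [cnt, ih h]
    rcases Nat.eq_zero_or_pos r with rfl | hr
    · simp
    · rw [if_neg hr.ne', ih (by omega)]
      simp

lemma cnt_eq_zero_of_gt_n {p n j m r : ℕ} (hj : j ≤ n) (h : n < r) : cnt p n j m r = 0 := by
  induction m generalizing r with
  | zero => simp [cnt]; omega
  | succ m ih =>
    rw [cnt, ih h, if_neg (by omega : r ≠ 0)]
    rcases Nat.lt_or_ge n (r-1) with h1 | h1
    · rw [ih h1]; simp
    · have : r - 1 = n := by omega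
      rw [this]
      simp

lemma cnt_eq_zero_of_gt {p n j m r : ℕ} (h : j + m < r) : cnt p n j m r = 0 := by
  induction m generalizing r with
  | zero => simp [cnt]; omega
  | succ m ih =>
    rw [cnt, ih (by omega), if_neg (by omega : r ≠ 0), ih (by omega)]
    simp

noncomputable def con (p n j m d : ℕ) : ℝ :=
  (p : ℝ)^(j*m) * ∏ i ∈ range d,
    (((p:ℝ)^m - (p:ℝ)^i) * ((p:ℝ)^(n-j-i) - 1) / ((p:ℝ)^(i+1) - 1))


lemma Hne {p : ℕ} (hp : 2 ≤ p) (e : ℕ) :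
    ∀ d, (∏ i ∈ range d, ((p:ℝ)^(i+1) - 1)) ≠ 0 := by
  intro d
  refine Finset.prod_ne_zero_iff.2 fun i _ => ?_
  have : (2:ℝ) ≤ (p:ℝ) := by exact_mod_cast hp
  have h1 : (2:ℝ) ≤ (p:ℝ)^(i+1) := le_trans this (le_self_pow₀ (by linarith) (by omega))
  linarith

lemma con_rec {p n j m e : ℕ} (hp : 2 ≤ p) (he : j + e ≤ n) :
    con p n j (m+1) (e+1) =
      con p n j m (e+1) * (p:ℝ)^(j+e+1) + con p n j m e * ((p:ℝ)^n - (p:ℝ)^(j+e)) := by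
  obtain ⟨N, hN⟩ : ∃ N, n = j + e + N := ⟨n - j - e, by omega⟩
  have hsplit : ∀ M d, (∏ i ∈ range d,
      (((p:ℝ)^M - (p:ℝ)^i) * ((p:ℝ)^(n-j-i) - 1) / ((p:ℝ)^(i+1) - 1))) =
      (∏ i ∈ range d, ((p:ℝ)^M - (p:ℝ)^i)) * (∏ i ∈ range d, ((p:ℝ)^(n-j-i) - 1)) /
        (∏ i ∈ range d, ((p:ℝ)^(i+1) - 1)) := by
    intro M d
    rw [Finset.prod_div_distrib, Finset.prod_mul_distrib]
  simp only [con, hsplit]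
  have hA' : (∏ i ∈ range (e+1), ((p:ℝ)^(m+1) - (p:ℝ)^i)) =
      (p:ℝ)^e * ((p:ℝ)^(m+1) - 1) * ∏ i ∈ range e, ((p:ℝ)^m - (p:ℝ)^i) := by
    rw [Finset.prod_range_succ']
    have : ∀ i ∈ range e, ((p:ℝ)^(m+1) - (p:ℝ)^(i+1)) = (p:ℝ) * ((p:ℝ)^m - (p:ℝ)^i) := by
      intro i _
      rw [pow_succ, pow_succ]
      ring
    rw [Finset.prod_congr rfl this, Finset.prod_mul_distrib, Finset.prod_const,
      Finset.card_range]
    simp only [pow_zero]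
    ring
  have hA : (∏ i ∈ range (e+1), ((p:ℝ)^m - (p:ℝ)^i)) =
      (∏ i ∈ range e, ((p:ℝ)^m - (p:ℝ)^i)) * ((p:ℝ)^m - (p:ℝ)^e) :=
    Finset.prod_range_succ _ _
  have hG : (∏ i ∈ range (e+1), ((p:ℝ)^(n-j-i) - 1)) =
      (∏ i ∈ range e, ((p:ℝ)^(n-j-i) - 1)) * ((p:ℝ)^N - 1) := by
    rw [Finset.prod_range_succ, show n - j - e = N by omega]
  have hH : (∏ i ∈ range (e+1), ((p:ℝ)^(i+1) - 1)) =
      (∏ i ∈ range e, ((p:ℝ)^(i+1) - 1)) * ((p:ℝ)^(e+1) - 1) :=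
    Finset.prod_range_succ _ _
  rw [hA', hA, hG, hH, hN]
  have hne1 := Hne hp e e
  have hne2 : ((p:ℝ)^(e+1) - 1) ≠ 0 := by
    have : (2:ℝ) ≤ (p:ℝ) := by exact_mod_cast hp
    have h1 : (2:ℝ) ≤ (p:ℝ)^(e+1) := le_trans this (le_self_pow₀ (by linarith) (by omega))
    linarith
  field_simp
  ring

lemma cnt_cast {p n j : ℕ} (hp : 2 ≤ p) (hj : j ≤ n) (m : ℕ) :
    ∀ r, j ≤ r → (cnt p n j m r : ℝ) = con p n j m (r - j) := by
  induction m with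
  | zero =>
    intro r hr
    rcases eq_or_lt_of_le hr with rfl | hlt
    · simp [cnt, con]
    · rw [show cnt p n j 0 r = 0 by simp [cnt]; omega]
      rw [con, Finset.prod_eq_zero (i := 0) (by simp; omega)]
      · simp
      · simp
  | succ m ih =>
    intro r hr
    rcases eq_or_lt_of_le hr with rfl | hlt
    · -- r = j
      rw [cnt]
      have h2 : (if j = 0 then 0 else cnt p n j m (j-1) * (p ^ n - p ^ (j-1))) = 0 := by
        rcases Nat.eq_zero_or_pos j with rfl | hj0
        · simp
        · rw [if_neg hj0.ne', cnt_eq_zero_of_lt (by omega)]; simp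
      rw [h2]
      push_cast
      rw [ih j le_rfl]
      simp only [con, Nat.sub_self, range_zero, prod_empty, mul_one]
      rw [← pow_add]
      ring_nf
    · -- r > j
      rcases Nat.lt_or_ge (n+1) r with hbig | hsmall
      · -- r ≥ n + 2 : everything is zero
        rw [cnt_eq_zero_of_gt_n hj (by omega)]
        rw [con, Finset.prod_eq_zero (i := n - j) (by simp; omega)]
        · simp
        · rw [show n - j - (n-j) = 0 by omega]; simp
      · -- main case : j < r ≤ n + 1
        have hr1 : j ≤ r - 1 := by omega
        have hc : ((p:ℕ)^n - (p:ℕ)^(r-1) : ℕ) = ((p:ℝ)^n - (p:ℝ)^(r-1) : ℝ) := by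
          rw [Nat.cast_sub (Nat.pow_le_pow_right (by omega) (by omega : r - 1 ≤ n))]
          push_cast
          ring
        rw [cnt, if_neg (by omega : r ≠ 0)]
        push_cast [hc]
        rw [ih r hr, ih (r-1) hr1]
        have key := con_rec (p:=p) (n:=n) (j:=j) (m:=m) (e := r - 1 - j) hp (by omega)
        rw [show (r - 1 - j) + 1 = r - j by omega, show j + (r - 1 - j) + 1 = r by omega,
          show j + (r - 1 - j) = r - 1 by omega] at key
        exact key.symm
-- assume p3 contents; test Ep part standalone first
noncomputable def Ep (p a b : ℕ) : ℝ := ∏ t ∈ Finset.Ico a b, ((p:ℝ)^t - 1)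

lemma Ep_pos {p : ℕ} (hp : 2 ≤ p) {a b : ℕ} (ha : 1 ≤ a) : 0 < Ep p a b := by
  refine Finset.prod_pos fun t ht => ?_
  have h1 : (2:ℝ) ≤ (p:ℝ) := by exact_mod_cast hp
  have h2 : (2:ℝ) ≤ (p:ℝ)^t :=
    le_trans h1 (le_self_pow₀ (by linarith) (by have := (Finset.mem_Ico.1 ht).1; omega))
  linarith

lemma Ep_ne {p : ℕ} (hp : 2 ≤ p) {a b : ℕ} (ha : 1 ≤ a) : Ep p a b ≠ 0 :=
  (Ep_pos hp ha).ne'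

lemma Ep_mul {p : ℕ} {a b c : ℕ} (hab : a ≤ b) (hbc : b ≤ c) :
    Ep p a b * Ep p b c = Ep p a c :=
  Finset.prod_Ico_consecutive _ hab hbc

lemma prod_desc {p c d : ℕ} (h : d ≤ c + 1) :
    (∏ i ∈ range d, ((p:ℝ)^(c-i) - 1)) = Ep p (c+1-d) (c+1) := by
  rw [Ep]
  refine Finset.prod_nbij' (fun i => c - i) (fun t => c - t) ?_ ?_ ?_ ?_ ?_
  · intro i hi; simp only [mem_range] at hi; simp only [mem_Ico]; omega
  · intro t ht; simp only [mem_Ico] at ht; simp only [mem_range]; omega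
  · intro i hi; simp only [mem_range] at hi; show c - (c - i) = i; omega
  · intro t ht; simp only [mem_Ico] at ht; show c - (c - t) = t; omega
  · intro i hi; rfl

lemma prod_shift {p d : ℕ} :
    (∏ i ∈ range d, ((p:ℝ)^(i+1) - 1)) = Ep p 1 (d+1) := by
  rw [Ep, Finset.prod_Ico_eq_prod_range]
  simp [add_comm]

lemma prod_sub_pow {p c d : ℕ} (h : d ≤ c) :
    (∏ i ∈ range d, ((p:ℝ)^c - (p:ℝ)^i)) =
      (p:ℝ)^(∑ i ∈ range d, i) * Ep p (c+1-d) (c+1) := by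
  have : ∀ i ∈ range d, ((p:ℝ)^c - (p:ℝ)^i) = (p:ℝ)^i * ((p:ℝ)^(c-i) - 1) := by
    intro i hi
    simp only [mem_range] at hi
    rw [mul_sub, mul_one, ← pow_add, show i + (c - i) = c by omega]
  rw [Finset.prod_congr rfl this, Finset.prod_mul_distrib, Finset.prod_pow_eq_pow_sum,
    prod_desc (by omega)]

lemma Ep_identity {p n j k h r : ℕ} (hj : j ≤ k) (hk : k ≤ n) (hh : h ≤ n)
    (hr : r = n - h) (h1 : j ≤ r) (h2 : k - j ≤ h) :
    Ep p (r+1-j) (r+1) * Ep p (h+1-(k-j)) (h+1) *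
      (Ep p (n+1-r) (n+1) * Ep p (n+1-r) (n+1)) * Ep p 1 (r-j+1)
    = Ep p (n-j+1) (n+1) * Ep p (n-k+1) (n+1) * Ep p 1 (r+1) *
      (Ep p (n-k+1-(r-j)) (n-k+1) * Ep p (n-r+1) (n-j+1)) := by
  have hg : n-k+1-(r-j) = h+1-(k-j) := by omega
  have hn1 : n+1-r = h+1 := by omega
  have hn2 : n-r+1 = h+1 := by omega
  rw [hg, hn1, hn2]
  have e1 : Ep p 1 (r-j+1) * Ep p (r+1-j) (r+1) = Ep p 1 (r+1) := by
    rw [show r-j+1 = r+1-j by omega]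
    exact Ep_mul (by omega) (by omega)
  have e2 : Ep p (h+1) (n-j+1) * Ep p (n-j+1) (n+1) = Ep p (h+1) (n+1) :=
    Ep_mul (by omega) (by omega)
  have e3 : Ep p (h+1-(k-j)) (h+1) * Ep p (h+1) (n+1) = Ep p (h+1-(k-j)) (n+1) :=
    Ep_mul (by omega) (by omega)
  have e4 : Ep p (h+1-(k-j)) (n-k+1) * Ep p (n-k+1) (n+1) = Ep p (h+1-(k-j)) (n+1) :=
    Ep_mul (by omega) (by omega)
  calc Ep p (r+1-j) (r+1) * Ep p (h+1-(k-j)) (h+1) *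
      (Ep p (h+1) (n+1) * Ep p (h+1) (n+1)) * Ep p 1 (r-j+1)
      = (Ep p 1 (r-j+1) * Ep p (r+1-j) (r+1)) *
        ((Ep p (h+1-(k-j)) (h+1) * Ep p (h+1) (n+1)) * Ep p (h+1) (n+1)) := by ring
    _ = Ep p 1 (r+1) * (Ep p (h+1-(k-j)) (n+1) * Ep p (h+1) (n+1)) := by rw [e1, e3]
    _ = Ep p 1 (r+1) *
        ((Ep p (h+1-(k-j)) (n-k+1) * Ep p (n-k+1) (n+1)) *
         (Ep p (h+1) (n-j+1) * Ep p (n-j+1) (n+1))) := by rw [e4, e2]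
    _ = _ := by ring

lemma sum_range_split (a b : ℕ) :
    ∑ i ∈ range (a+b), i = (∑ i ∈ range a, i) + ((∑ i ∈ range b, i) + b * a) := by
  rw [Finset.sum_range_add]
  congr 1
  rw [Finset.sum_add_distrib, Finset.sum_const, Finset.card_range, smul_eq_mul]
  ring

lemma B_eq {p n r : ℕ} (hr : r ≤ n) :
    con p n 0 n r = (p:ℝ)^(∑ i ∈ range r, i) *
      (Ep p (n+1-r) (n+1) * Ep p (n+1-r) (n+1)) / Ep p 1 (r+1) := by
  rw [con]
  simp only [Nat.zero_mul, pow_zero, one_mul, Nat.sub_zero]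
  rw [Finset.prod_div_distrib, Finset.prod_mul_distrib, prod_sub_pow hr,
    prod_desc (by omega), prod_shift]
  ring

lemma B_pos {p n r : ℕ} (hp : 2 ≤ p) (hr : r ≤ n) : 0 < con p n 0 n r := by
  rw [B_eq hr]
  have h0 : (0:ℝ) < (p:ℝ) := by
    have : (2:ℝ) ≤ (p:ℝ) := by exact_mod_cast hp
    linarith
  have e1 : (0:ℝ) < Ep p (n+1-r) (n+1) := Ep_pos hp (by omega)
  have e2 : (0:ℝ) < Ep p 1 (r+1) := Ep_pos hp le_rfl
  exact div_pos (mul_pos (pow_pos h0 _) (mul_pos e1 e1)) e2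

lemma A_eq {p n j k r : ℕ} (hjr : j ≤ r) (hrn : r ≤ n) (hjk : j ≤ k) (hkn : k ≤ n)
    (hd : r - j ≤ n - k) :
    con p n j (n-k) (r-j) = (p:ℝ)^(j*(n-k)) *
      ((p:ℝ)^(∑ i ∈ range (r-j), i) * Ep p (n-k+1-(r-j)) (n-k+1)) *
      Ep p (n-r+1) (n-j+1) / Ep p 1 (r-j+1) := by
  rw [con, Finset.prod_div_distrib, Finset.prod_mul_distrib, prod_sub_pow hd,
    prod_desc (by omega : r - j ≤ (n-j) + 1), prod_shift,
    show (n-j)+1-(r-j) = n-r+1 by omega, show (n-j)+1 = n-j+1 by omega]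
  ring

noncomputable def qpol (p n j k : ℕ) : Polynomial ℝ :=
  Polynomial.C (((p:ℝ)^(j*(k-j)) * (p:ℝ)^(∑ i ∈ range j, i) *
      Ep p (n-j+1) (n+1) * Ep p (n-k+1) (n+1))⁻¹)
    * ((∏ u ∈ range j, (Polynomial.C ((p:ℝ)^(n-u)) - Polynomial.X))
    * (∏ u ∈ range (k-j), (Polynomial.C (((p:ℝ)^u)⁻¹) * Polynomial.X - 1)))

lemma qpol_natDegree {p n j k : ℕ} (hj : j ≤ k) : (qpol p n j k).natDegree ≤ k := by
  refine le_trans (Polynomial.natDegree_mul_le) ?_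
  have h1 : (Polynomial.C (((p:ℝ)^(j*(k-j)) * (p:ℝ)^(∑ i ∈ range j, i) *
      Ep p (n-j+1) (n+1) * Ep p (n-k+1) (n+1))⁻¹)).natDegree = 0 :=
    Polynomial.natDegree_C _
  rw [h1, zero_add]
  have h2 : (∏ u ∈ range j, (Polynomial.C ((p:ℝ)^(n-u)) - Polynomial.X)).natDegree ≤ j := ?_
  have h3 : (∏ u ∈ range (k-j),
      (Polynomial.C (((p:ℝ)^u)⁻¹) * Polynomial.X - 1)).natDegree ≤ k - j := ?_
  refine le_trans (Polynomial.natDegree_mul_le) (le_trans (add_le_add h2 h3) (by omega))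
  rotate_left
  · refine le_trans (Polynomial.natDegree_prod_le _ _) ?_
    refine le_trans (Finset.sum_le_card_nsmul _ _ 1 fun u _ => ?_) (by simp)
    refine le_trans (Polynomial.natDegree_sub_le _ _) ?_
    simp [Polynomial.natDegree_C, Polynomial.natDegree_X]
  · refine le_trans (Polynomial.natDegree_prod_le _ _) ?_
    refine le_trans (Finset.sum_le_card_nsmul _ _ 1 fun u _ => ?_) (by simp)
    refine le_trans (Polynomial.natDegree_sub_le _ _) ?_
    simp only [Polynomial.natDegree_one, max_le_iff]
    constructor
    · exact le_trans (Polynomial.natDegree_mul_le) (by simp [Polynomial.natDegree_C])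
    · omega

lemma qpol_eval_mul {p n j k h : ℕ} (hp : 2 ≤ p) (hj : j ≤ k) (hk : k ≤ n) (hh : h ≤ n) :
    (qpol p n j k).eval ((p:ℝ)^h) * con p n 0 n (n-h) = (cnt p n j (n-k) (n-h) : ℝ) := by
  have hP2 : (2:ℝ) ≤ (p:ℝ) := by exact_mod_cast hp
  have hP0 : (0:ℝ) < (p:ℝ) := by linarith
  have heval : (qpol p n j k).eval ((p:ℝ)^h) =
      (((p:ℝ)^(j*(k-j)) * (p:ℝ)^(∑ i ∈ range j, i) *
        Ep p (n-j+1) (n+1) * Ep p (n-k+1) (n+1))⁻¹) *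
      ((∏ u ∈ range j, ((p:ℝ)^(n-u) - (p:ℝ)^h)) *
       (∏ u ∈ range (k-j), (((p:ℝ)^u)⁻¹ * (p:ℝ)^h - 1))) := by
    simp [qpol, Polynomial.eval_prod]
  set r := n - h with hrdef
  rcases Nat.lt_or_ge r j with hc1 | hc1
  · -- r < j : both sides zero
    rw [cnt_eq_zero_of_lt hc1, heval]
    rw [Finset.prod_eq_zero (Finset.mem_range.2 hc1)
      (by rw [show n - r = h by omega]; ring)]
    simp
  rcases Nat.lt_or_ge h (k - j) with hc2 | hc2
  · -- h < k - j : both sides zero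
    rw [cnt_eq_zero_of_gt (by omega), heval]
    rw [Finset.prod_eq_zero (i := h) (Finset.mem_range.2 hc2)
      (by rw [inv_mul_cancel₀ (by positivity)]; ring)]
    simp
  · -- main case
    have hrn : r ≤ n := by omega
    have hd : r - j ≤ n - k := by omega
    rw [cnt_cast hp (hj.trans hk) _ r hc1, A_eq hc1 hrn hj hk hd, B_eq hrn, heval]
    have hL1 : (∏ u ∈ range j, ((p:ℝ)^(n-u) - (p:ℝ)^h)) =
        (p:ℝ)^(h*j) * Ep p (r+1-j) (r+1) := by
      have hc : ∀ u ∈ range j, ((p:ℝ)^(n-u) - (p:ℝ)^h) =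
          (p:ℝ)^h * ((p:ℝ)^(r-u) - 1) := by
        intro u hu
        simp only [mem_range] at hu
        rw [mul_sub, mul_one, ← pow_add, show h + (r-u) = n-u by omega]
      rw [Finset.prod_congr rfl hc, Finset.prod_mul_distrib, Finset.prod_const,
        Finset.card_range, ← pow_mul, prod_desc (by omega)]
    have hL2 : (∏ u ∈ range (k-j), (((p:ℝ)^u)⁻¹ * (p:ℝ)^h - 1)) =
        Ep p (h+1-(k-j)) (h+1) := by
      have hc : ∀ u ∈ range (k-j), (((p:ℝ)^u)⁻¹ * (p:ℝ)^h - 1) =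
          ((p:ℝ)^(h-u) - 1) := by
        intro u hu
        simp only [mem_range] at hu
        rw [show (p:ℝ)^h = (p:ℝ)^u * (p:ℝ)^(h-u) by
          rw [← pow_add, show u + (h-u) = h by omega]]
        rw [inv_mul_cancel_left₀ (by positivity)]
      rw [Finset.prod_congr rfl hc, prod_desc (by omega)]
    rw [hL1, hL2]
    have hs := sum_range_split (r-j) j
    rw [show r - j + j = r by omega] at hs
    have hEp := Ep_identity (p := p) hj hk hh hrdef hc1 hc2
    have hpw : h*j + j*(r-j) = j*(n-k) + j*(k-j) := by
      have hq : h + (r-j) = (n-k) + (k-j) := by omega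
      calc h*j + j*(r-j) = j*(h + (r-j)) := by ring
        _ = j*((n-k) + (k-j)) := by rw [hq]
        _ = j*(n-k) + j*(k-j) := by ring
    rw [hs]
    have ne1 : Ep p (n-j+1) (n+1) ≠ 0 := Ep_ne hp (by omega)
    have ne2 : Ep p (n-k+1) (n+1) ≠ 0 := Ep_ne hp (by omega)
    have ne3 : Ep p 1 (r+1) ≠ 0 := Ep_ne hp le_rfl
    have ne4 : Ep p 1 (r-j+1) ≠ 0 := Ep_ne hp le_rfl
    have ne5 : (p:ℝ) ≠ 0 := by linarith
    have hpw2 : (p:ℝ)^(j*(n-k)) * (p:ℝ)^(j*(k-j)) = (p:ℝ)^(h*j) * (p:ℝ)^(j*(r-j)) := by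
      rw [← pow_add, ← pow_add, ← hpw]
    field_simp
    linear_combination ((p:ℝ)^(h*j) * (p:ℝ)^(∑ i ∈ Finset.range (r-j), i) *
        (p:ℝ)^(∑ i ∈ Finset.range j, i) * (p:ℝ)^(j*(r-j))) * hEp -
      ((p:ℝ)^(∑ i ∈ Finset.range (r-j), i) * (p:ℝ)^(∑ i ∈ Finset.range j, i) *
        (Ep p (n-j+1) (n+1) * Ep p (n-k+1) (n+1) * Ep p 1 (r+1) *
         (Ep p (n-k+1-(r-j)) (n-k+1) * Ep p (n-r+1) (n-j+1)))) * hpw2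

open Module LinearMap

variable {F : Type} [Field F] [Fintype F] {n : ℕ}

lemma finrank_sup_span_singleton (W : Submodule F (Fin n → F)) {x : Fin n → F} (hx : x ∉ W) :
    finrank F ↥(W ⊔ Submodule.span F {x}) = finrank F ↥W + 1 := by
  have hx0 : x ≠ 0 := by rintro rfl; exact hx W.zero_mem
  have h1 : finrank F ↥(Submodule.span F {x}) = 1 := finrank_span_singleton hx0
  have h2 : W ⊓ Submodule.span F {x} = ⊥ := by
    rw [Submodule.eq_bot_iff]
    rintro y ⟨hyW, hyx⟩
    rcases Submodule.mem_span_singleton.1 hyx with ⟨c, rfl⟩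
    rcases eq_or_ne c 0 with rfl | hc
    · simp
    · exact absurd (by simpa [smul_smul, inv_mul_cancel₀ hc] using W.smul_mem c⁻¹ hyW) hx
  have h3 := Submodule.finrank_sup_add_finrank_inf_eq W (Submodule.span F {x})
  rw [h2, h1, finrank_bot] at h3
  omega

lemma card_step (W : Submodule F (Fin n → F)) (r : ℕ) :
    Nat.card {x : Fin n → F // finrank F ↥(W ⊔ Submodule.span F {x}) = r} =
      (if finrank F ↥W = r then Fintype.card F ^ r else 0) +
      (if finrank F ↥W + 1 = r then Fintype.card F ^ n - Fintype.card F ^ (r-1) else 0) := by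
  classical
  have hmem : ∀ x : Fin n → F, x ∈ W → W ⊔ Submodule.span F {x} = W := by
    intro x hx
    rw [sup_eq_left]
    rwa [Submodule.span_singleton_le_iff_mem]
  rcases eq_or_ne (finrank F ↥W) r with ht | ht
  · -- predicate ↔ x ∈ W
    have hiff : ∀ x : Fin n → F, finrank F ↥(W ⊔ Submodule.span F {x}) = r ↔ x ∈ W := by
      intro x
      constructor
      · intro hr
        by_contra hx
        rw [finrank_sup_span_singleton W hx, ht] at hr
        omega
      · intro hx; rw [hmem x hx, ht]
    rw [Nat.card_congr (Equiv.subtypeEquivRight hiff)]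
    have : Nat.card {x : Fin n → F // x ∈ W} = Fintype.card F ^ r := by
      rw [Nat.card_eq_fintype_card, card_eq_pow_finrank (K := F) (V := ↥W), ht]
    rw [this]
    have : finrank F ↥W + 1 ≠ r := by omega
    simp [ht, this]
  · rcases eq_or_ne (finrank F ↥W + 1) r with ht1 | ht1
    · -- predicate ↔ x ∉ W
      have hiff : ∀ x : Fin n → F, finrank F ↥(W ⊔ Submodule.span F {x}) = r ↔ ¬ (x ∈ W) := by
        intro x
        constructor
        · intro hr hx; rw [hmem x hx] at hr; exact ht hr
        · intro hx; rw [finrank_sup_span_singleton W hx]; exact ht1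
      rw [Nat.card_congr (Equiv.subtypeEquivRight hiff), Nat.card_eq_fintype_card,
        Fintype.card_subtype_compl]
      have h1 : Fintype.card {x : Fin n → F // x ∈ W} = Fintype.card F ^ (r - 1) := by
        rw [card_eq_pow_finrank (K := F) (V := ↥W)]
        congr 1
        omega
      have h2 : Fintype.card (Fin n → F) = Fintype.card F ^ n := by
        simp [Fintype.card_fun]
      rw [h1, h2]
      simp [ht, ht1]
    · -- predicate never holds
      have hiff : ∀ x : Fin n → F, ¬ (finrank F ↥(W ⊔ Submodule.span F {x}) = r) := by
        intro x hr
        by_cases hx : x ∈ W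
        · rw [hmem x hx] at hr; exact ht hr
        · rw [finrank_sup_span_singleton W hx] at hr; exact ht1 hr
      have : IsEmpty {x : Fin n → F // finrank F ↥(W ⊔ Submodule.span F {x}) = r} :=
        ⟨fun x => hiff x.1 x.2⟩
      rw [Nat.card_of_isEmpty]
      simp [ht, ht1]

lemma card_tuples (U : Submodule F (Fin n → F)) (m r : ℕ) :
    Nat.card {v : Fin m → (Fin n → F) //
        finrank F ↥(U ⊔ Submodule.span F (Set.range v)) = r}
      = cnt (Fintype.card F) n (finrank F ↥U) m r := by
  classical
  induction m generalizing r with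
  | zero =>
    have hv : ∀ v : Fin 0 → (Fin n → F), U ⊔ Submodule.span F (Set.range v) = U := by
      intro v; simp
    rcases eq_or_ne r (finrank F ↥U) with rfl | hr
    · rw [Nat.card_congr (Equiv.subtypeUnivEquiv (fun v => by rw [hv v]))]
      simp [Nat.card_eq_fintype_card, cnt]
    · have he : IsEmpty {v : Fin 0 → (Fin n → F) //
          finrank F ↥(U ⊔ Submodule.span F (Set.range v)) = r} :=
        ⟨fun v => hr (by rw [← v.2, hv v.1])⟩
      rw [Nat.card_of_isEmpty]
      simp [cnt, hr]
  | succ m ih =>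
    have hsup : ∀ (x : Fin n → F) (w : Fin m → Fin n → F),
        U ⊔ Submodule.span F (Set.range (Fin.cons x w)) =
          (U ⊔ Submodule.span F (Set.range w)) ⊔ Submodule.span F {x} := by
      intro x w
      rw [Fin.range_cons, Submodule.span_insert, sup_comm (Submodule.span F {x}),
        ← sup_assoc]
    have e : {v : Fin (m+1) → (Fin n → F) //
          finrank F ↥(U ⊔ Submodule.span F (Set.range v)) = r}
        ≃ Σ w : Fin m → Fin n → F,
          {x : Fin n → F // finrank F
            ↥((U ⊔ Submodule.span F (Set.range w)) ⊔ Submodule.span F {x}) = r} :=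
      { toFun := fun v => ⟨Fin.tail v.1, v.1 0, by
          rw [← hsup (v.1 0) (Fin.tail v.1), Fin.cons_self_tail]; exact v.2⟩
        invFun := fun q => ⟨Fin.cons q.2.1 q.1, by rw [hsup]; exact q.2.2⟩
        left_inv := fun v => Subtype.ext (Fin.cons_self_tail v.1)
        right_inv := fun q => by
          rcases q with ⟨w, x, hx⟩
          exact Sigma.ext (by simp [Fin.tail_cons]) (by simp [Fin.tail_cons]; rfl) }
    rw [Nat.card_congr e, Nat.card_eq_fintype_card, Fintype.card_sigma]
    have hterm : ∀ w : Fin m → Fin n → F,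
        Fintype.card {x : Fin n → F // finrank F
            ↥((U ⊔ Submodule.span F (Set.range w)) ⊔ Submodule.span F {x}) = r} =
          (if finrank F ↥(U ⊔ Submodule.span F (Set.range w)) = r
            then Fintype.card F ^ r else 0) +
          (if finrank F ↥(U ⊔ Submodule.span F (Set.range w)) + 1 = r
            then Fintype.card F ^ n - Fintype.card F ^ (r-1) else 0) := by
      intro w
      rw [← Nat.card_eq_fintype_card]
      exact card_step _ r
    rw [Finset.sum_congr rfl (fun w _ => hterm w), Finset.sum_add_distrib]
    have hsum1 : ∀ (r' : ℕ) (c : ℕ), (∑ w : Fin m → Fin n → F,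
        if finrank F ↥(U ⊔ Submodule.span F (Set.range w)) = r' then c else 0)
          = cnt (Fintype.card F) n (finrank F ↥U) m r' * c := by
      intro r' c
      rw [← Finset.sum_filter, Finset.sum_const, smul_eq_mul, ← ih r']
      congr 1
      rw [Nat.card_eq_fintype_card, Fintype.card_subtype]
    rw [hsum1 r (Fintype.card F ^ r)]
    show _ = cnt (Fintype.card F) n (finrank F ↥U) (m+1) r
    rw [cnt]
    congr 1
    rcases eq_or_ne r 0 with rfl | hr
    · simp
    · rw [if_neg hr]
      have : ∀ w : Fin m → Fin n → F,
          (if finrank F ↥(U ⊔ Submodule.span F (Set.range w)) + 1 = r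
            then Fintype.card F ^ n - Fintype.card F ^ (r-1) else 0) =
          (if finrank F ↥(U ⊔ Submodule.span F (Set.range w)) = r - 1
            then Fintype.card F ^ n - Fintype.card F ^ (r-1) else 0) := by
        intro w
        congr 1
        simp only [eq_iff_iff]
        omega
      rw [Finset.sum_congr rfl (fun w _ => this w), hsum1 (r-1) _]

variable {F : Type} [Field F] [Fintype F] {n : ℕ}

noncomputable def extEquiv (K Kc : Submodule F (Fin n → F)) (hc : IsCompl K Kc)
    {d : ℕ} (b : Basis (Fin d) F ↥Kc) (s : ↥K →ₗ[F] (Fin n → F)) :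
    (Fin d → (Fin n → F)) ≃
      {f : (Fin n → F) →ₗ[F] (Fin n → F) // ∀ x : ↥K, f x = s x} where
  toFun v := ⟨(s.coprod (b.constr F v)).comp
      (Submodule.prodEquivOfIsCompl K Kc hc).symm.toLinearMap, by
    intro x
    simp [Submodule.prodEquivOfIsCompl_symm_apply_left]⟩
  invFun f i := f.1 (b i)
  left_inv v := by
    funext i
    simp [Submodule.prodEquivOfIsCompl_symm_apply_right]
  right_inv f := by
    refine Subtype.ext (LinearMap.ext fun x => ?_)
    obtain ⟨⟨a, c⟩, rfl⟩ := (Submodule.prodEquivOfIsCompl K Kc hc).surjective x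
    have h1 : (Submodule.prodEquivOfIsCompl K Kc hc) (a, c) = (a : Fin n → F) + c :=
      Submodule.coe_prodEquivOfIsCompl' (p := K) (q := Kc) hc (a, c)
    have h2 : (b.constr F fun i => f.1 (b i)) = f.1.comp Kc.subtype :=
      b.constr_eq F fun i => rfl
    simp only [LinearMap.comp_apply, LinearEquiv.coe_coe, LinearEquiv.symm_apply_apply,
      LinearMap.coprod_apply, h1, h2, map_add, f.2 a,
      Submodule.prodEquivOfIsCompl_symm_apply_left,
      Submodule.prodEquivOfIsCompl_symm_apply_right]
    simp

lemma range_extEquiv (K Kc : Submodule F (Fin n → F)) (hc : IsCompl K Kc)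
    {d : ℕ} (b : Basis (Fin d) F ↥Kc) (s : ↥K →ₗ[F] (Fin n → F))
    (v : Fin d → (Fin n → F)) :
    range ((extEquiv K Kc hc b s v) : (Fin n → F) →ₗ[F] (Fin n → F)) =
      range s ⊔ Submodule.span F (Set.range v) := by
  show range ((s.coprod (b.constr F v)).comp
      (Submodule.prodEquivOfIsCompl K Kc hc).symm.toLinearMap) = _
  rw [LinearMap.range_comp, LinearEquiv.range, Submodule.map_top, LinearMap.range_coprod,
    b.constr_range]

lemma rank_iff (f : (Fin n → F) →ₗ[F] (Fin n → F)) (h : ℕ) (hn : h ≤ n) :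
    finrank F (ker f) = h ↔ finrank F (range f) = n - h := by
  have := finrank_range_add_finrank_ker f
  rw [Module.finrank_fintype_fun_eq_card, Fintype.card_fin] at this
  omega

lemma card_maps_ext (K : Submodule F (Fin n → F)) (s : ↥K →ₗ[F] (Fin n → F))
    (h : ℕ) (hn : h ≤ n) :
    Nat.card {f : (Fin n → F) →ₗ[F] (Fin n → F) //
        finrank F (ker f) = h ∧ ∀ x : ↥K, f x = s x} =
      Nat.card {v : Fin (n - finrank F ↥K) → (Fin n → F) //
        finrank F ↥(range s ⊔ Submodule.span F (Set.range v)) = n - h} := by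
  obtain ⟨Kc, hc⟩ := Submodule.exists_isCompl K
  have hd : finrank F ↥Kc = n - finrank F ↥K := by
    have := Submodule.finrank_add_eq_of_isCompl hc
    rw [Module.finrank_fintype_fun_eq_card, Fintype.card_fin] at this
    omega
  let b : Basis (Fin (n - finrank F ↥K)) F ↥Kc := Module.finBasisOfFinrankEq F ↥Kc hd
  refine Nat.card_congr ?_
  calc {f : (Fin n → F) →ₗ[F] (Fin n → F) //
        finrank F (ker f) = h ∧ ∀ x : ↥K, f x = s x}
      ≃ {f : (Fin n → F) →ₗ[F] (Fin n → F) //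
        (∀ x : ↥K, f x = s x) ∧ finrank F (ker f) = h} :=
        Equiv.subtypeEquivRight fun f => and_comm
    _ ≃ {g : {f : (Fin n → F) →ₗ[F] (Fin n → F) // ∀ x : ↥K, f x = s x} //
        finrank F (ker g.1) = h} :=
        (Equiv.subtypeSubtypeEquivSubtypeInter _ _).symm
    _ ≃ {v : Fin (n - finrank F ↥K) → (Fin n → F) //
        finrank F ↥(range s ⊔ Submodule.span F (Set.range v)) = n - h} := by
        refine ((extEquiv K Kc hc b s).subtypeEquiv fun v => ?_).symm
        rw [rank_iff _ h hn, range_extEquiv]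

lemma card_maps (h : ℕ) (hn : h ≤ n) :
    Nat.card {f : (Fin n → F) →ₗ[F] (Fin n → F) // finrank F (ker f) = h} =
      Nat.card {v : Fin n → (Fin n → F) //
        finrank F ↥((⊥ : Submodule F (Fin n → F)) ⊔
          Submodule.span F (Set.range v)) = n - h} := by
  refine Nat.card_congr ?_
  refine (((Pi.basisFun F (Fin n)).constr F (M' := Fin n → F)).toEquiv.subtypeEquiv
    fun v => ?_).symm
  rw [show (((Pi.basisFun F (Fin n)).constr F (M' := Fin n → F)).toEquiv v)
      = (Pi.basisFun F (Fin n)).constr F v from rfl,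
    rank_iff _ h hn, bot_sup_eq, ← Basis.constr_range (Pi.basisFun F (Fin n)) F]

open Module LinearMap in
theorem stmt_18 (p n k : ℕ) (hp : IsPrimePow p)
    (F : Type) [Field F] [Fintype F] (hF : Fintype.card F = p)
    (K : Submodule F (Fin n → F)) (hK : finrank F K = k)
    (s : K →ₗ[F] (Fin n → F)) :
    ∃ q : Polynomial ℝ, q.natDegree ≤ k ∧
      ∀ h : ℕ, h ≤ n →
        q.eval ((p : ℝ) ^ h) =
          (Nat.card {f : (Fin n → F) →ₗ[F] (Fin n → F) //
              finrank F (ker f) = h ∧ ∀ x : K, f x = s x} : ℝ) /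
            (Nat.card {f : (Fin n → F) →ₗ[F] (Fin n → F) //
              finrank F (ker f) = h} : ℝ) := by
  have hp2 : 2 ≤ p := hp.two_le
  have hkn : k ≤ n := by
    rw [← hK]
    have := Submodule.finrank_le K
    rwa [Module.finrank_fintype_fun_eq_card, Fintype.card_fin] at this
  have hjk : finrank F (LinearMap.range s) ≤ k := by
    rw [← hK]; exact LinearMap.finrank_range_le s
  refine ⟨qpol p n (finrank F (LinearMap.range s)) k, qpol_natDegree hjk, fun h hh => ?_⟩
  have hB : Nat.card {f : (Fin n → F) →ₗ[F] (Fin n → F) // finrank F (ker f) = h}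
      = cnt p n 0 n (n - h) := by
    rw [card_maps h hh, card_tuples, finrank_bot, hF]
  have hA : Nat.card {f : (Fin n → F) →ₗ[F] (Fin n → F) //
      finrank F (ker f) = h ∧ ∀ x : K, f x = s x}
      = cnt p n (finrank F (LinearMap.range s)) (n - k) (n - h) := by
    rw [card_maps_ext K s h hh, card_tuples, hF, hK]
  have hBcast : ((cnt p n 0 n (n-h) : ℕ) : ℝ) = con p n 0 n (n-h) := by
    simpa using cnt_cast hp2 (Nat.zero_le n) n (n-h) (Nat.zero_le _)
  rw [hA, hB, hBcast, eq_div_iff (B_pos hp2 (by omega)).ne']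
  exact qpol_eval_mul hp2 hjk hkn hh
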